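/- Let 0 < ε ≤ 1, m ∈ [ε, 1−ε], and n_2 < m < n_1 with n_1, n_2 ∈ [0,1]. Then Q := [(m−n_2)/(n_1−n_2)]·[(m−ε/2)² − n_1²] + [(n_1−m)/(n_1−n_2)]·[(m+ε/2)² − n_2²] satisfies Q < εm + ε²/4 ≤ ε. -/

import Mathlib

/-- Case-2 hedging bound in the HOPS sharpness proof, for `y = 0`. -/
theorem case2_hedging_y0 (ε m n₁ n₂ : ℝ) (hε : 0 < ε) (hε1 : ε ≤ 1)
    (hm : m ∈ Set.Icc ε (1 - ε)) (hn₁ : n₁ ∈ Set.Icc (0 : ℝ) 1) (hn₂ : n₂ ∈ Set.Icc (0 : ℝ) 1)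
    (h₂ : n₂ < m) (h₁ : m < n₁) :
    ((m - n₂) / (n₁ - n₂)) * ((m - ε / 2) ^ 2 - n₁ ^ 2) +
        ((n₁ - m) / (n₁ - n₂)) * ((m + ε / 2) ^ 2 - n₂ ^ 2)
      < ε * m + ε ^ 2 / 4 ∧ ε * m + ε ^ 2 / 4 ≤ ε := by
  obtain ⟨hmε, hm1⟩ := hm
  have hd : (0 : ℝ) < n₁ - n₂ := by linarith
  constructor
  · rw [div_mul_eq_mul_div, div_mul_eq_mul_div, ← add_div, div_lt_iff₀ hd]
    nlinarith [mul_pos (sub_pos.mpr h₂) (sub_pos.mpr h₁), mul_pos hε (sub_pos.mpr h₂),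
      mul_pos (mul_pos (sub_pos.mpr h₂) (sub_pos.mpr h₁)) hd, mul_pos hε (lt_of_lt_of_le hε hmε)]
  · nlinarith
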